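/- Let (X, d_X) and (Y, d_Y) be non-Archimedean metric spaces such that every ball in X contains at least two distinct points, and let P₁, P₂ ∈ D♭(X, Y) with P₁ ≠ P₂. Then β^{*0}_{X,Y}(P₁, P₂) = ρ_s(P₁, P₂), where β^{*0}_{X,Y}(P₁, P₂) = sup_{λ > 0} β^{*λ}_{X,Y}(P₁, P₂). -/

import Mathlib

open scoped ENNReal

/-- A ball in a metric space: an open or closed ball of positive radius. -/
def IsBall {X : Type*} [MetricSpace X] (B : Set X) : Prop :=
  ∃ (a : X) (r : ℝ), 0 < r ∧ (B = Metric.ball a r ∨ B = Metric.closedBall a r)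

/-- The type `M♭(X)` of all balls of `X`. -/
abbrev BallSet (X : Type*) [MetricSpace X] := {B : Set X // IsBall B}

-- `β^λ_{X,Y}(P₁,P₂)`: zero if `P₁ = P₂`; otherwise the infimum of those `ε > 0` such that
-- `d_Y(P₁(B), P₂(B^{λε})) ≤ ε` and `d_Y(P₂(B), P₁(B^{λε})) ≤ ε` for every ball `B`, where
-- `B^{δ}` denotes the `δ`-neighborhood (thickening) of `B`, which is again a ball.
open Classical in
noncomputable def betaL {X Y : Type*} [MetricSpace X] [MetricSpace Y]
    (lam : ℝ) (P₁ P₂ : BallSet X → Y) : ℝ≥0∞ :=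
  if P₁ = P₂ then 0 else
    sInf {e : ℝ≥0∞ | ∃ ε : ℝ, 0 < ε ∧ e = ENNReal.ofReal ε ∧
      ∀ B : BallSet X, ∃ B' : BallSet X,
        (B' : Set X) = Metric.thickening (lam * ε) (B : Set X) ∧
        edist (P₁ B) (P₂ B') ≤ ENNReal.ofReal ε ∧
        edist (P₂ B) (P₁ B') ≤ ENNReal.ofReal ε}

/-- `β^{*λ}_{X,Y}(P₁,P₂)`: the infimum of those `ε > 0` such that for every ball `B` there
exist positive `ε_B, ε'_B ≤ ε` with `d_Y(P₁(B), P₂(B^{λε_B})) ≤ ε` and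
`d_Y(P₂(B), P₁(B^{λε'_B})) ≤ ε`. -/
noncomputable def betaStarL {X Y : Type*} [MetricSpace X] [MetricSpace Y]
    (lam : ℝ) (P₁ P₂ : BallSet X → Y) : ℝ≥0∞ :=
  sInf {e : ℝ≥0∞ | ∃ ε : ℝ, 0 < ε ∧ e = ENNReal.ofReal ε ∧
    ∀ B : BallSet X, ∃ εB εB' : ℝ, 0 < εB ∧ εB ≤ ε ∧ 0 < εB' ∧ εB' ≤ ε ∧
      ∃ B' B'' : BallSet X,
        (B' : Set X) = Metric.thickening (lam * εB) (B : Set X) ∧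
        (B'' : Set X) = Metric.thickening (lam * εB') (B : Set X) ∧
        edist (P₁ B) (P₂ B') ≤ ENNReal.ofReal ε ∧
        edist (P₂ B) (P₁ B'') ≤ ENNReal.ofReal ε}

/-- `ρ_s(P₁,P₂) = sup_{B ∈ M♭(X)} d_Y(P₁(B), P₂(B))`. -/
noncomputable def rhoSB {X Y : Type*} [MetricSpace X] [MetricSpace Y]
    (P₁ P₂ : BallSet X → Y) : ℝ≥0∞ :=
  ⨆ B : BallSet X, edist (P₁ B) (P₂ B)

/-- `ρ_H(P₁,P₂)`: the Hausdorff distance between the graphs of `P₁` and `P₂` inside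
`W = M♭(X) × Y` with the sup-metric `max (d_{X,H}, d_Y)`, written out via the
`sup-inf` formula for the Hausdorff distance. -/
noncomputable def rhoHB {X Y : Type*} [MetricSpace X] [MetricSpace Y]
    (P₁ P₂ : BallSet X → Y) : ℝ≥0∞ :=
  max
    (⨆ B : BallSet X, ⨅ B' : BallSet X,
      max (EMetric.hausdorffEdist (B : Set X) (B' : Set X)) (edist (P₁ B) (P₂ B')))
    (⨆ B : BallSet X, ⨅ B' : BallSet X,
      max (EMetric.hausdorffEdist (B : Set X) (B' : Set X)) (edist (P₂ B) (P₁ B')))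

/-- Membership in `D♭^{(1)}(X,Y)`: `d_Y(P(B), P(B^ε)) ≤ ε` for all `ε > 0` and all balls `B`. -/
def memDflatOne {X Y : Type*} [MetricSpace X] [MetricSpace Y] (P : BallSet X → Y) : Prop :=
  ∀ ε : ℝ, 0 < ε → ∀ B B' : BallSet X,
    (B' : Set X) = Metric.thickening ε (B : Set X) → edist (P B) (P B') ≤ ENNReal.ofReal ε

/-- In a non-Archimedean metric space, thickening a ball by a small amount gives back
the same ball. -/
lemma ball_thick_eq {X : Type*} [MetricSpace X]
    (hna : ∀ x y z : X, dist x z ≤ max (dist x y) (dist y z))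
    (B : BallSet X) :
    ∃ r : ℝ, 0 < r ∧ ∀ δ : ℝ, 0 < δ → δ ≤ r →
      Metric.thickening δ (B : Set X) = (B : Set X) := by
  obtain ⟨a, r, hr, hB⟩ := B.2
  refine ⟨r, hr, fun δ hδ hδr => ?_⟩
  refine Set.Subset.antisymm ?_ (Metric.self_subset_thickening hδ _)
  intro x hx
  rw [Metric.mem_thickening_iff] at hx
  obtain ⟨y, hy, hxy⟩ := hx
  rcases hB with hB | hB <;> rw [hB] at hy ⊢
  · rw [Metric.mem_ball] at hy ⊢
    exact lt_of_le_of_lt (hna x y a) (max_lt (lt_of_lt_of_le hxy hδr) hy)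
  · rw [Metric.mem_closedBall] at hy ⊢
    exact le_trans (hna x y a) (max_le (le_trans hxy.le hδr) hy)

theorem stmt_18 {X Y : Type*} [MetricSpace X] [MetricSpace Y]
    (hnaX : ∀ x y z : X, dist x z ≤ max (dist x y) (dist y z))
    (hnaY : ∀ x y z : Y, dist x z ≤ max (dist x y) (dist y z))
    (hball : ∀ B : Set X, IsBall B → ∃ x ∈ B, ∃ y ∈ B, x ≠ y)
    (P₁ P₂ : BallSet X → Y) (hne : P₁ ≠ P₂) :
    (⨆ (lam : ℝ) (_ : 0 < lam), betaStarL lam P₁ P₂) = rhoSB P₁ P₂ := by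
  apply le_antisymm
  · -- for each lam > 0, betaStarL lam ≤ rhoSB
    apply iSup₂_le
    intro lam hlam
    by_cases htop : rhoSB P₁ P₂ = ⊤
    · exact htop ▸ le_top
    apply ENNReal.le_of_forall_pos_le_add
    intro ε hε _
    set ε' : ℝ := (rhoSB P₁ P₂).toReal + ε with hε'def
    have hε' : 0 < ε' := by positivity
    have hρle : rhoSB P₁ P₂ ≤ ENNReal.ofReal ε' := by
      rw [hε'def, ENNReal.ofReal_add ENNReal.toReal_nonneg ε.coe_nonneg,
        ENNReal.ofReal_toReal htop]
      exact le_self_add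
    have hmem : ENNReal.ofReal ε' ∈ {e : ℝ≥0∞ | ∃ ε : ℝ, 0 < ε ∧ e = ENNReal.ofReal ε ∧
        ∀ B : BallSet X, ∃ εB εB' : ℝ, 0 < εB ∧ εB ≤ ε ∧ 0 < εB' ∧ εB' ≤ ε ∧
          ∃ B' B'' : BallSet X,
            (B' : Set X) = Metric.thickening (lam * εB) (B : Set X) ∧
            (B'' : Set X) = Metric.thickening (lam * εB') (B : Set X) ∧
            edist (P₁ B) (P₂ B') ≤ ENNReal.ofReal ε ∧
            edist (P₂ B) (P₁ B'') ≤ ENNReal.ofReal ε} := by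
      refine ⟨ε', hε', rfl, fun B => ?_⟩
      obtain ⟨rB, hrB, hthick⟩ := ball_thick_eq hnaX B
      set δ : ℝ := min ε' (rB / lam) with hδdef
      have hδ : 0 < δ := lt_min hε' (by positivity)
      have hδε : δ ≤ ε' := min_le_left _ _
      have hlamδ : lam * δ ≤ rB := by
        calc lam * δ ≤ lam * (rB / lam) :=
              mul_le_mul_of_nonneg_left (min_le_right _ _) hlam.le
          _ = rB := by field_simp
      have hBeq : Metric.thickening (lam * δ) (B : Set X) = (B : Set X) :=
        hthick _ (by positivity) hlamδ
      refine ⟨δ, δ, hδ, hδε, hδ, hδε, B, B, hBeq.symm, hBeq.symm, ?_, ?_⟩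
      · exact le_trans (le_iSup (fun B => edist (P₁ B) (P₂ B)) B) hρle
      · rw [edist_comm]
        exact le_trans (le_iSup (fun B => edist (P₁ B) (P₂ B)) B) hρle
    calc betaStarL lam P₁ P₂ ≤ ENNReal.ofReal ε' := sInf_le hmem
      _ = rhoSB P₁ P₂ + ε := by
          rw [hε'def, ENNReal.ofReal_add ENNReal.toReal_nonneg ε.coe_nonneg,
            ENNReal.ofReal_toReal htop, ENNReal.ofReal_coe_nnreal]
  · -- rhoSB ≤ sup
    apply iSup_le
    intro B₀
    apply ENNReal.le_of_forall_nnreal_lt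
    intro c hc
    rcases eq_or_lt_of_le (zero_le : (0 : NNReal) ≤ c) with hc0 | hc0
    · simp [← hc0]
    have hc0' : (0 : ℝ) < (c : ℝ) := hc0
    obtain ⟨r₀, hr₀, hthick⟩ := ball_thick_eq hnaX B₀
    have hlam : (0 : ℝ) < r₀ / (c : ℝ) := by positivity
    refine le_trans ?_
      (le_iSup₂ (f := fun lam (_ : 0 < lam) => betaStarL lam P₁ P₂) (r₀ / (c : ℝ)) hlam)
    rw [betaStarL]
    apply le_sInf
    rintro e ⟨ε, hε, rfl, hprop⟩
    by_contra hlt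
    push_neg at hlt
    have hεc : ε < (c : ℝ) := by
      rw [← ENNReal.ofReal_coe_nnreal] at hlt
      exact (ENNReal.ofReal_lt_ofReal_iff hc0').mp hlt
    obtain ⟨εB, εB', h1, h2, _, _, B', B'', hB', _, he1, _⟩ := hprop B₀
    have hBeq : (B' : Set X) = (B₀ : Set X) := by
      rw [hB']
      apply hthick
      · positivity
      · calc r₀ / (c : ℝ) * εB ≤ r₀ / (c : ℝ) * (c : ℝ) :=
              mul_le_mul_of_nonneg_left (h2.trans hεc.le) hlam.le
          _ = r₀ := by field_simp
    have hB'eq : B' = B₀ := Subtype.ext hBeq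
    rw [hB'eq] at he1
    exact absurd (lt_of_le_of_lt (he1.trans hlt.le) hc) (lt_irrefl _)
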